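/- arXiv:1107.0518 — 2 statements merged into one kernel-verified Lean document; each statement's English description precedes it below -/
import Mathlib

section
/- Let W_G be a Weyl group with parabolic subgroup W_L corresponding to I ⊆ Π, and let u, v be minimal length coset representatives of W_L·u and W_L·v. Let s be a simple reflection with ℓ(us) ≤ ℓ(u) and ℓ(vs) ≤ ℓ(v). Then the following are equivalent: (1) W_L·u ≤ W_L·v; (2) W_L·us ≤ W_L·v; (3) W_L·us ≤ W_L·vs. (Property Z for parabolic Bruhat order.) -/
open CoxeterSystem

/-- A Weyl group `W` (presented as a Coxeter system) acting on a vector space `V`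
with a distinguished system of roots whose simple roots form a basis. -/
structure WeylRootData (B W V : Type) [Group W] [AddCommGroup V] [Module ℝ V] where
  /-- The Coxeter matrix. -/
  M : CoxeterMatrix B
  /-- The Coxeter system structure on `W`. -/
  cs : CoxeterSystem M W
  /-- The simple roots, forming a basis of `V`. -/
  basis : Module.Basis B ℝ V
  /-- The action of `W` on `V`. -/
  act : W →* (V ≃ₗ[ℝ] V)
  /-- The set of roots. -/
  IsRoot : V → Prop
  isRoot_simple : ∀ i, IsRoot (basis i)
  isRoot_neg : ∀ v, IsRoot v → IsRoot (-v)
  isRoot_act : ∀ (w : W) (v : V), IsRoot v → IsRoot (act w v)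
  root_pos_or_neg : ∀ v, IsRoot v →
    (∀ i, 0 ≤ basis.repr v i) ∨ (∀ i, basis.repr v i ≤ 0)
  root_ne_zero : ∀ v, IsRoot v → v ≠ 0
  /-- The reflection associated to each root. -/
  refl : V → W
  refl_simple : ∀ i, refl (basis i) = cs.simple i
  refl_neg : ∀ v, refl (-v) = refl v
  refl_conj : ∀ (w : W) (v : V), IsRoot v → refl (act w v) = w * refl v * w⁻¹
  refl_isReflection : ∀ v, IsRoot v → cs.IsReflection (refl v)
  act_refl_self : ∀ v, IsRoot v → act (refl v) v = -v
  /-- The standard fact for simple roots: `ℓ(w sᵢ) = ℓ(w) + 1` iff `w(αᵢ) > 0`. -/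
  length_simple_iff : ∀ (w : W) (i : B),
      cs.length (w * cs.simple i) = cs.length w + 1 ↔
        ∀ j, 0 ≤ basis.repr (act w (basis i)) j

namespace WeylRootData

variable {B W V : Type} [Group W] [AddCommGroup V] [Module ℝ V]
variable (D : WeylRootData B W V)

/-- `v` is a positive root. -/
def IsPos (v : V) : Prop := D.IsRoot v ∧ ∀ i, 0 ≤ D.basis.repr v i

/-- `v` is a negative root. -/
def IsNeg (v : V) : Prop := D.IsRoot v ∧ ∀ i, D.basis.repr v i ≤ 0

/-- Bruhat order on `W`: generated by multiplying by reflections while increasing length. -/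
def bruhatLE : W → W → Prop :=
  Relation.ReflTransGen (fun u v =>
    ∃ t, D.cs.IsReflection t ∧ v = u * t ∧ D.cs.length u < D.cs.length v)

/-- The standard parabolic subgroup `W_L` generated by the simple reflections in `I`. -/
def WL (I : Set B) : Subgroup W := Subgroup.closure (D.cs.simple '' I)

/-- `u` and `v` lie in the same coset `W_L·u = W_L·v`. -/
def cosetEq (I : Set B) (u v : W) : Prop := ∃ x ∈ D.WL I, v = x * u

/-- Induced Bruhat order on `W_L\W`: some coset representatives are comparable. -/
def cosetLE (I : Set B) (u v : W) : Prop :=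
  ∃ x ∈ D.WL I, ∃ y ∈ D.WL I, D.bruhatLE (x * u) (y * v)

/-- Strict induced Bruhat order on `W_L\W`. -/
def cosetLT (I : Set B) (u v : W) : Prop := D.cosetLE I u v ∧ ¬ D.cosetEq I u v

/-- `u` has minimal length in its coset `W_L·u` (P-minimal). -/
def IsMinRep (I : Set B) (u : W) : Prop :=
  ∀ x ∈ D.WL I, D.cs.length u ≤ D.cs.length (x * u)

/-- `u` has maximal length in its coset `W_L·u` (P-maximal). -/
def IsMaxRep (I : Set B) (u : W) : Prop :=
  ∀ x ∈ D.WL I, D.cs.length (x * u) ≤ D.cs.length u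

/-- The span of the simple roots in `I`. -/
def spanL (I : Set B) : Submodule ℝ V := Submodule.span ℝ (D.basis '' I)

/-- `v ∈ Δ(𝔩)`: a root in the span of the simple roots in `I`. -/
def InL (I : Set B) (v : V) : Prop := D.IsRoot v ∧ v ∈ D.spanL I

/-- `v ∈ Δ(𝔫)`: a positive root not in the span of `I`. -/
def InN (I : Set B) (v : V) : Prop := D.IsPos v ∧ v ∉ D.spanL I

/-- `v ∈ Δ(𝔫⁻)`: a negative root not in the span of `I`. -/
def InNneg (I : Set B) (v : V) : Prop := D.IsNeg v ∧ v ∉ D.spanL I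

end WeylRootData


/-! ### Machinery: the reflection cocycle, strong exchange, Bruhat lifting lemmas,
and parabolic coset combinatorics. None of this uses the root data; it only uses the
Coxeter system. -/

namespace CoxProp

open List CoxeterSystem

open scoped Classical

variable {B W : Type} [Group W] {M : CoxeterMatrix B} (cs : CoxeterSystem M W)

/-- The sign-flip involution on `W × ℤˣ` attached to a simple reflection. -/
noncomputable def etaFun (i : B) : W × ℤˣ → W × ℤˣ :=
  fun x => (cs.simple i * x.1 * cs.simple i, if x.1 = cs.simple i then -x.2 else x.2)

lemma simple_conj_cancel (i : B) (t : W) :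
    cs.simple i * (cs.simple i * t * cs.simple i) * cs.simple i = t := by
  have h : cs.simple i * t * cs.simple i = cs.simple i * (t * cs.simple i) := by
    rw [mul_assoc]
  rw [h, cs.simple_mul_simple_cancel_left i, cs.simple_mul_simple_cancel_right i]

lemma etaFun_involutive (i : B) : Function.Involutive (etaFun cs i) := by
  rintro ⟨t, e⟩
  unfold etaFun
  dsimp only
  have h1 := simple_conj_cancel cs i t
  by_cases h : t = cs.simple i
  · subst h
    simp [cs.simple_mul_simple_self]
  · have h2 : cs.simple i * t * cs.simple i ≠ cs.simple i := by
      intro hc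
      apply h
      have := congrArg (fun z => cs.simple i * z * cs.simple i) hc
      rw [h1] at this
      rw [this, cs.simple_mul_simple_self, one_mul]
    simp [h, h2, h1]

/-- The permutation of `W × ℤˣ` attached to a simple reflection. -/
noncomputable def eta (i : B) : Equiv.Perm (W × ℤˣ) := (etaFun_involutive cs i).toPerm

lemma eta_apply (i : B) (x : W × ℤˣ) : eta cs i x = etaFun cs i x := rfl

lemma sj_conj_pow (i j : B) (m : ℕ) :
    cs.simple j * (cs.simple i * cs.simple j) ^ m * cs.simple j =
      ((cs.simple i * cs.simple j)⁻¹) ^ m := by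
  have h : cs.simple j * (cs.simple i * cs.simple j) * (cs.simple j)⁻¹ =
      (cs.simple i * cs.simple j)⁻¹ := by
    rw [cs.inv_simple, mul_inv_rev, cs.inv_simple, cs.inv_simple]
    rw [show cs.simple j * (cs.simple i * cs.simple j) * cs.simple j
        = cs.simple j * cs.simple i * (cs.simple j * cs.simple j) by group]
    rw [cs.simple_mul_simple_self, mul_one]
  calc cs.simple j * (cs.simple i * cs.simple j) ^ m * cs.simple j
      = cs.simple j * (cs.simple i * cs.simple j) ^ m * (cs.simple j)⁻¹ := by
        rw [cs.inv_simple]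
    _ = (cs.simple j * (cs.simple i * cs.simple j) * (cs.simple j)⁻¹) ^ m := (conj_pow ..).symm
    _ = ((cs.simple i * cs.simple j)⁻¹) ^ m := by rw [h]

lemma flipA (i j : B) (m : ℕ) :
    ((cs.simple i * cs.simple j) ^ m)⁻¹ * cs.simple j * (cs.simple i * cs.simple j) ^ m =
      ((cs.simple i * cs.simple j)⁻¹) ^ (2 * m) * cs.simple j := by
  set q := cs.simple i * cs.simple j with hq
  have h := sj_conj_pow cs i j m
  have h2 : cs.simple j * q ^ m = (q⁻¹) ^ m * cs.simple j := by
    calc cs.simple j * q ^ m = (cs.simple j * q ^ m * cs.simple j) * cs.simple j := by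
          rw [mul_assoc, cs.simple_mul_simple_self, mul_one]
      _ = (q⁻¹) ^ m * cs.simple j := by rw [h]
  calc (q ^ m)⁻¹ * cs.simple j * q ^ m = (q ^ m)⁻¹ * (cs.simple j * q ^ m) := by
        rw [mul_assoc]
    _ = (q ^ m)⁻¹ * ((q⁻¹) ^ m * cs.simple j) := by rw [h2]
    _ = ((q⁻¹) ^ m * (q⁻¹) ^ m) * cs.simple j := by rw [inv_pow]; group
    _ = ((q⁻¹) ^ (2 * m)) * cs.simple j := by rw [← pow_add]; ring_nf

lemma flipB (i j : B) (m : ℕ) :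
    ((cs.simple i * cs.simple j) ^ m)⁻¹ * (cs.simple j * cs.simple i * cs.simple j) *
        (cs.simple i * cs.simple j) ^ m =
      ((cs.simple i * cs.simple j)⁻¹) ^ (2 * m + 1) * cs.simple j := by
  set q := cs.simple i * cs.simple j with hq
  have h0 : cs.simple j * cs.simple i * cs.simple j = q⁻¹ * cs.simple j := by
    rw [hq, mul_inv_rev, cs.inv_simple, cs.inv_simple]
  have hA := flipA cs i j m
  calc (q ^ m)⁻¹ * (cs.simple j * cs.simple i * cs.simple j) * q ^ m
      = q⁻¹ * ((q ^ m)⁻¹ * cs.simple j * q ^ m) := by rw [h0]; group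
    _ = q⁻¹ * ((q⁻¹) ^ (2 * m) * cs.simple j) := by rw [hA]
    _ = ((q⁻¹) ^ (2 * m + 1)) * cs.simple j := by rw [pow_succ']; group

lemma if_neg_mul (P : Prop) [Decidable P] (x : ℤˣ) :
    (if P then -x else x) = x * (if P then (-1 : ℤˣ) else 1) := by
  split <;> simp

lemma conj_eq_iff (g a b : W) : g * a * g⁻¹ = b ↔ a = g⁻¹ * b * g := by
  constructor
  · intro h
    rw [← h]
    group
  · intro h
    rw [h]
    group

lemma eta_mul_pow_apply (i j : B) (m : ℕ) (t : W) (e : ℤˣ) :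
    ((eta cs i * eta cs j) ^ m) (t, e) =
      ((cs.simple i * cs.simple j) ^ m * t * ((cs.simple i * cs.simple j) ^ m)⁻¹,
        e * ∏ n ∈ Finset.range (2 * m),
          (if t = ((cs.simple i * cs.simple j)⁻¹) ^ n * cs.simple j then (-1 : ℤˣ) else 1)) := by
  induction m with
  | zero => simp
  | succ m ih =>
    have hcond1 : ((cs.simple i * cs.simple j) ^ m * t * ((cs.simple i * cs.simple j) ^ m)⁻¹
        = cs.simple j) ↔
        (t = ((cs.simple i * cs.simple j)⁻¹) ^ (2 * m) * cs.simple j) := by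
      rw [conj_eq_iff, flipA cs i j m]
    have hcond2 : (cs.simple j * ((cs.simple i * cs.simple j) ^ m * t *
          ((cs.simple i * cs.simple j) ^ m)⁻¹) * cs.simple j = cs.simple i) ↔
        (t = ((cs.simple i * cs.simple j)⁻¹) ^ (2 * m + 1) * cs.simple j) := by
      have e1 : cs.simple j * ((cs.simple i * cs.simple j) ^ m * t *
          ((cs.simple i * cs.simple j) ^ m)⁻¹) * cs.simple j
          = cs.simple j * ((cs.simple i * cs.simple j) ^ m * t *
          ((cs.simple i * cs.simple j) ^ m)⁻¹) * (cs.simple j)⁻¹ := by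
        rw [cs.inv_simple]
      rw [e1, conj_eq_iff, cs.inv_simple, conj_eq_iff, flipB cs i j m]
    have hgrp : cs.simple i * (cs.simple j * ((cs.simple i * cs.simple j) ^ m * t *
          ((cs.simple i * cs.simple j) ^ m)⁻¹) * cs.simple j) * cs.simple i
        = (cs.simple i * cs.simple j) ^ (m + 1) * t *
          ((cs.simple i * cs.simple j) ^ (m + 1))⁻¹ := by
      rw [pow_succ' (cs.simple i * cs.simple j) m, mul_inv_rev, mul_inv_rev,
        cs.inv_simple, cs.inv_simple]
      simp only [mul_assoc]
    have hprod : 2 * (m + 1) = 2 * m + 1 + 1 := by ring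
    rw [pow_succ', Equiv.Perm.mul_apply, ih, Equiv.Perm.mul_apply, eta_apply, eta_apply]
    unfold etaFun
    dsimp only
    rw [hprod, Finset.prod_range_succ, Finset.prod_range_succ, Prod.mk.injEq]
    refine ⟨hgrp, ?_⟩
    rw [if_neg_mul, if_neg_mul]
    simp only [hcond1, hcond2]
    simp only [mul_assoc]

lemma eta_liftable : M.IsLiftable (fun i => eta cs i) := by
  intro i j
  apply Equiv.ext
  rintro ⟨t, e⟩
  rw [eta_mul_pow_apply]
  have hq : (cs.simple i * cs.simple j) ^ M i j = 1 := cs.simple_mul_simple_pow i j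
  have hperiod : ∀ n : ℕ,
      ((cs.simple i * cs.simple j)⁻¹) ^ (M i j + n) = ((cs.simple i * cs.simple j)⁻¹) ^ n := by
    intro n
    rw [pow_add, inv_pow, hq, inv_one, one_mul]
  have h2 : 2 * M i j = M i j + M i j := by ring
  have hP : (∏ n ∈ Finset.range (2 * M i j),
      (if t = ((cs.simple i * cs.simple j)⁻¹) ^ n * cs.simple j then (-1 : ℤˣ) else 1)) = 1 := by
    rw [h2, Finset.prod_range_add]
    have : ∀ n ∈ Finset.range (M i j),
        (if t = ((cs.simple i * cs.simple j)⁻¹) ^ (M i j + n) * cs.simple j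
          then (-1 : ℤˣ) else 1) =
        (if t = ((cs.simple i * cs.simple j)⁻¹) ^ n * cs.simple j then (-1 : ℤˣ) else 1) := by
      intro n _
      rw [hperiod n]
    rw [Finset.prod_congr rfl this]
    exact Int.units_mul_self _
  rw [hq, hP]
  simp

/-- The reflection cocycle, as a homomorphism `W →* Perm (W × ℤˣ)`. -/
noncomputable def phi : W →* Equiv.Perm (W × ℤˣ) :=
  cs.lift ⟨fun i => eta cs i, eta_liftable cs⟩

lemma phi_simple (i : B) : phi cs (cs.simple i) = eta cs i :=
  cs.lift_apply_simple (eta_liftable cs) i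

/-- The sign of the cocycle at `(w, t)`. -/
noncomputable def nn (w t : W) : ℤˣ := ((phi cs w) (t, 1)).2

lemma phi_apply (w t : W) (e : ℤˣ) : phi cs w (t, e) = (w * t * w⁻¹, e * nn cs w t) := by
  have key : ∀ w : W, ∀ t : W, ∀ e : ℤˣ,
      phi cs w (t, e) = (w * t * w⁻¹, e * ((phi cs w) (t, 1)).2) := by
    intro w
    induction w using cs.simple_induction_left with
    | one =>
      intro t e
      simp [map_one, Equiv.Perm.one_apply]
    | mul_simple_left i w ih =>
      intro t e
      rw [map_mul, Equiv.Perm.mul_apply, Equiv.Perm.mul_apply, ih t e, ih t 1, phi_simple,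
        eta_apply, eta_apply]
      unfold etaFun
      dsimp only
      congr 1
      · rw [mul_inv_rev, cs.inv_simple]
        group
      · split <;> simp
  exact key w t e

lemma nn_one (t : W) : nn cs 1 t = 1 := by
  unfold nn
  simp [map_one, Equiv.Perm.one_apply]

lemma nn_mul (w w' t : W) : nn cs (w * w') t = nn cs w' t * nn cs w (w' * t * w'⁻¹) := by
  show (phi cs (w * w') (t, 1)).2 = _
  rw [map_mul, Equiv.Perm.mul_apply, phi_apply, phi_apply]
  dsimp only
  rw [one_mul]

lemma nn_simple (i : B) (x : W) :
    nn cs (cs.simple i) x = if x = cs.simple i then (-1 : ℤˣ) else 1 := by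
  unfold nn
  rw [phi_simple, eta_apply]
  unfold etaFun
  split <;> simp

lemma nn_refl_self (t : W) (ht : cs.IsReflection t) : nn cs t t = -1 := by
  obtain ⟨r, k, rfl⟩ := ht
  have h1 : phi cs (r * cs.simple k * r⁻¹) (r * cs.simple k * r⁻¹, 1)
      = phi cs r (phi cs (cs.simple k) (phi cs r⁻¹ (r * cs.simple k * r⁻¹, 1))) := by
    rw [show r * cs.simple k * r⁻¹ = r * (cs.simple k * r⁻¹) by group, map_mul, map_mul,
      Equiv.Perm.mul_apply, Equiv.Perm.mul_apply]
  have h2 : phi cs r⁻¹ (r * cs.simple k * r⁻¹, 1) = (cs.simple k, nn cs r⁻¹ (r * cs.simple k * r⁻¹)) := by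
    rw [phi_apply, one_mul]
    congr 1
    group
  have h3 : phi cs (cs.simple k) (cs.simple k, nn cs r⁻¹ (r * cs.simple k * r⁻¹))
      = (cs.simple k, -(nn cs r⁻¹ (r * cs.simple k * r⁻¹))) := by
    rw [phi_simple, eta_apply]
    unfold etaFun
    dsimp only
    rw [if_pos rfl]
    congr 1
    rw [mul_assoc, cs.simple_mul_simple_self, mul_one]
  have h4 : ∀ y : ℤˣ, phi cs r (cs.simple k, y) = (r * cs.simple k * r⁻¹, y * nn cs r (cs.simple k)) := by
    intro y
    rw [phi_apply]
  have hinv : nn cs r⁻¹ (r * cs.simple k * r⁻¹) * nn cs r (cs.simple k) = 1 := by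
    have h5 : phi cs r (phi cs r⁻¹ (r * cs.simple k * r⁻¹, 1)) = (r * cs.simple k * r⁻¹, 1) := by
      rw [← Equiv.Perm.mul_apply, ← map_mul, mul_inv_cancel, map_one, Equiv.Perm.one_apply]
    rw [h2, h4] at h5
    have := congrArg Prod.snd h5
    simpa using this
  unfold nn
  rw [h1, h2, h3, h4]
  dsimp only
  rw [neg_mul, hinv]

lemma nn_wordProd (ω : List B) (t : W) :
    nn cs (cs.wordProd ω) t = (-1 : ℤˣ) ^ (List.count t (cs.rightInvSeq ω)) := by
  induction ω with
  | nil => simp [nn_one]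
  | cons a ω ih =>
    have hris : cs.rightInvSeq (a :: ω)
        = ((cs.wordProd ω)⁻¹ * cs.simple a * cs.wordProd ω) :: cs.rightInvSeq ω := rfl
    rw [cs.wordProd_cons, hris, nn_mul, ih, nn_simple]
    have hcond : (cs.wordProd ω * t * (cs.wordProd ω)⁻¹ = cs.simple a) ↔
        ((cs.wordProd ω)⁻¹ * cs.simple a * cs.wordProd ω = t) := by
      constructor
      · intro h; rw [← h]; group
      · intro h; rw [← h]; group
    by_cases h : (cs.wordProd ω)⁻¹ * cs.simple a * cs.wordProd ω = t
    · rw [if_pos (hcond.mpr h)]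
      have hcount : List.count t
          (((cs.wordProd ω)⁻¹ * cs.simple a * cs.wordProd ω) :: cs.rightInvSeq ω)
          = List.count t (cs.rightInvSeq ω) + 1 := by
        rw [h]
        simp [List.count_cons]
      rw [hcount, pow_succ]
    · rw [if_neg (fun hc => h (hcond.mp hc))]
      have hcount : List.count t
          (((cs.wordProd ω)⁻¹ * cs.simple a * cs.wordProd ω) :: cs.rightInvSeq ω)
          = List.count t (cs.rightInvSeq ω) := by
        simp [List.count_cons, beq_iff_eq, h]
      rw [hcount, mul_one]

lemma nn_neg_iff (w t : W) (ht : cs.IsReflection t) :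
    nn cs w t = -1 ↔ cs.length (w * t) < cs.length w := by
  constructor
  · intro h
    obtain ⟨ω, hred, hw⟩ := cs.exists_reduced_word' w
    have hmem : t ∈ cs.rightInvSeq ω := by
      by_contra hmem
      have h0 := nn_wordProd cs ω t
      rw [List.count_eq_zero.mpr hmem, pow_zero, ← hw, h] at h0
      exact absurd h0 (by decide)
    have h1 := (cs.isRightInversion_of_mem_rightInvSeq hred hmem).2
    rwa [← hw] at h1
  · intro h
    obtain ⟨τ, hred, hwt⟩ := cs.exists_reduced_word' (w * t)
    have hnm : t ∉ cs.rightInvSeq τ := by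
      intro hmem
      have h2 := (cs.isRightInversion_of_mem_rightInvSeq hred hmem).2
      rw [← hwt, mul_assoc, ht.mul_self, mul_one] at h2
      omega
    have h1 : nn cs (w * t) t = 1 := by
      rw [hwt, nn_wordProd, List.count_eq_zero.mpr hnm, pow_zero]
    have h0 : nn cs w t = nn cs t t * nn cs (w * t) t := by
      have h0' := nn_mul cs (w * t) t t
      rw [show w * t * t = w by rw [mul_assoc, ht.mul_self, mul_one]] at h0'
      rw [show t * t * t⁻¹ = t by rw [ht.mul_self, one_mul, ht.inv]] at h0'
      exact h0'
    rw [h0, nn_refl_self cs t ht, h1]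
    simp

lemma mem_rightInvSeq_of_lt {w t : W} (ht : cs.IsReflection t) (ω : List B)
    (hw : cs.wordProd ω = w) (h : cs.length (w * t) < cs.length w) :
    t ∈ cs.rightInvSeq ω := by
  have hn := (nn_neg_iff cs w t ht).mpr h
  rw [← hw, nn_wordProd] at hn
  by_contra hmem
  rw [List.count_eq_zero.mpr hmem, pow_zero] at hn
  exact absurd hn (by decide)

/-- Strong exchange. -/
theorem strong_exchange {w t : W} (ht : cs.IsReflection t) (ω : List B)
    (hw : cs.wordProd ω = w) (h : cs.length (w * t) < cs.length w) :
    ∃ j < ω.length, w * t = cs.wordProd (ω.eraseIdx j) := by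
  have hmem := mem_rightInvSeq_of_lt cs ht ω hw h
  obtain ⟨j, hj, hget⟩ := List.mem_iff_getElem.mp hmem
  have hj' : j < ω.length := by
    have := cs.length_rightInvSeq ω
    omega
  refine ⟨j, hj', ?_⟩
  have hD := cs.wordProd_mul_getD_rightInvSeq ω j
  rw [List.getD_eq_getElem _ _ hj, hget, hw] at hD
  exact hD

/-! ### Bruhat order lemmas -/

/-- One step of the Bruhat order. -/
def bstep : W → W → Prop := fun u v =>
  ∃ t, cs.IsReflection t ∧ v = u * t ∧ cs.length u < cs.length v

/-- The Bruhat order. -/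
def ble : W → W → Prop := Relation.ReflTransGen (bstep cs)

lemma cancel_identity (i : B) {t : W} (ht2 : t * t = 1) (x : W) :
    (x * t * cs.simple i) * (cs.simple i * t * cs.simple i) = x * cs.simple i := by
  have h5 : ∀ a : W, t * (t * a) = a := fun a => by rw [← mul_assoc, ht2, one_mul]
  have h6 : ∀ a : W, cs.simple i * (cs.simple i * a) = a := fun a =>
    cs.simple_mul_simple_cancel_left i
  calc (x * t * cs.simple i) * (cs.simple i * t * cs.simple i)
      = x * (t * (cs.simple i * (cs.simple i * (t * cs.simple i)))) := by
        simp only [mul_assoc]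
    _ = x * (t * (t * cs.simple i)) := by rw [h6]
    _ = x * cs.simple i := by rw [h5]

lemma cancel_identity2 (i : B) (x t : W) :
    (x * cs.simple i) * (cs.simple i * t * cs.simple i) = x * t * cs.simple i := by
  have h6 : ∀ a : W, cs.simple i * (cs.simple i * a) = a := fun a =>
    cs.simple_mul_simple_cancel_left i
  calc (x * cs.simple i) * (cs.simple i * t * cs.simple i)
      = x * (cs.simple i * (cs.simple i * (t * cs.simple i))) := by simp only [mul_assoc]
    _ = x * (t * cs.simple i) := by rw [h6]
    _ = x * t * cs.simple i := by rw [mul_assoc]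

lemma length_mul_simple_lt_iff (w : W) (i : B) :
    cs.length (w * cs.simple i) < cs.length w ↔
      cs.length (w * cs.simple i) + 1 = cs.length w := by
  rcases cs.length_mul_simple w i with h | h <;> omega

/-- Trivial descent lemma: if `u ≤ w` and `u·s < u` then `u·s ≤ w`. -/
lemma ble_desc {u w : W} (i : B) (h : ble cs u w)
    (hl : cs.length (u * cs.simple i) < cs.length u) : ble cs (u * cs.simple i) w := by
  refine Relation.ReflTransGen.trans (Relation.ReflTransGen.single ?_) h
  exact ⟨cs.simple i, cs.isReflection_simple i,
    (cs.simple_mul_simple_cancel_right i).symm, hl⟩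

/-- The key auxiliary lemma (covering version of lifting), proved by strong exchange. -/
lemma Z3 {w t : W} {i : B} (ht : cs.IsReflection t)
    (h1 : cs.length (w * t) < cs.length w)
    (h2 : cs.length (w * t) < cs.length (w * t * cs.simple i))
    (h3 : cs.length (w * cs.simple i) < cs.length w) :
    ble cs (w * t * cs.simple i) w := by
  obtain ⟨τ, hred, hτ⟩ := cs.exists_reduced_word' (w * cs.simple i)
  have hπ : cs.wordProd (τ ++ [i]) = w := by
    rw [cs.wordProd_append, cs.wordProd_singleton, ← hτ, cs.simple_mul_simple_cancel_right i]
  obtain ⟨j, hj, hjw⟩ := strong_exchange cs ht (τ ++ [i]) hπ h1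
  have hlenτ : τ.length = cs.length (w * cs.simple i) := by
    have : cs.length (cs.wordProd τ) = τ.length := hred
    rw [← hτ] at this
    omega
  rcases Nat.lt_or_ge j τ.length with hlt | hge
  · rw [List.eraseIdx_append_of_lt_length hlt, cs.wordProd_append,
      cs.wordProd_singleton] at hjw
    have hwts : w * t * cs.simple i = cs.wordProd (τ.eraseIdx j) := by
      rw [hjw, cs.simple_mul_simple_cancel_right i]
    have hℓz : cs.length (cs.wordProd (τ.eraseIdx j)) ≤ τ.length - 1 := by
      have hle := cs.length_wordProd_le (τ.eraseIdx j)
      have hlen := List.length_eraseIdx_add_one hlt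
      omega
    have step1 : bstep cs (cs.wordProd (τ.eraseIdx j)) (w * cs.simple i) := by
      refine ⟨cs.simple i * t * cs.simple i, ?_, ?_, ?_⟩
      · have := ht.conj (cs.simple i)
        rwa [cs.inv_simple] at this
      · rw [← hwts, cancel_identity cs i ht.mul_self w]
      · omega
    have step2 : bstep cs (w * cs.simple i) w :=
      ⟨cs.simple i, cs.isReflection_simple i,
        (cs.simple_mul_simple_cancel_right i).symm, h3⟩
    rw [hwts]
    exact (Relation.ReflTransGen.single step1).tail step2
  · have hj2 : j = τ.length := by
      have : j < τ.length + 1 := by simpa using hj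
      omega
    have herase : (τ ++ [i]).eraseIdx j = τ := by
      rw [hj2, List.eraseIdx_append_of_length_le (le_refl _)]
      simp
    rw [herase, ← hτ] at hjw
    rw [hjw, cs.simple_mul_simple_cancel_right i]
    exact Relation.ReflTransGen.refl

/-- Lifting lemma (one-sided): `x ≤ w`, `w·s < w`, `x·s > x` implies `x ≤ w·s`. -/
lemma Z7 : ∀ n : ℕ, ∀ w x : W, ∀ i : B, cs.length w ≤ n → ble cs x w →
    cs.length (w * cs.simple i) < cs.length w →
    cs.length x < cs.length (x * cs.simple i) →
    ble cs x (w * cs.simple i) := by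
  intro n
  induction n with
  | zero =>
    intro w x i hn hxw hws hxs
    omega
  | succ n ih =>
    intro w x i hn hxw hws hxs
    rcases Relation.ReflTransGen.cases_tail hxw with heq | ⟨w₁, hxw₁, t, ht, hw, hlt⟩
    · exfalso
      rw [heq] at hws
      omega
    · rcases Nat.lt_or_ge (cs.length (w₁ * cs.simple i)) (cs.length w₁) with hd | ha'
      · have h1 : ble cs x (w₁ * cs.simple i) := ih w₁ x i (by omega) hxw₁ hd hxs
        refine h1.tail ?_
        refine ⟨cs.simple i * t * cs.simple i, ?_, ?_, ?_⟩
        · have := ht.conj (cs.simple i)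
          rwa [cs.inv_simple] at this
        · rw [hw]; exact (cancel_identity2 cs i w₁ t).symm
        · have e1 := (length_mul_simple_lt_iff cs w₁ i).mp hd
          have e2 := (length_mul_simple_lt_iff cs w i).mp hws
          omega
      · have ha : cs.length w₁ < cs.length (w₁ * cs.simple i) :=
          lt_of_le_of_ne ha' (cs.length_mul_simple_ne w₁ i).symm
        have hw₁ : w₁ = w * t := by
          rw [hw, mul_assoc, ht.mul_self, mul_one]
        obtain ⟨τ, hred, hτ⟩ := cs.exists_reduced_word' (w * cs.simple i)
        have hπ : cs.wordProd (τ ++ [i]) = w := by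
          rw [cs.wordProd_append, cs.wordProd_singleton, ← hτ,
            cs.simple_mul_simple_cancel_right i]
        obtain ⟨j, hj, hjw⟩ := strong_exchange cs ht (τ ++ [i]) hπ (by rw [← hw₁]; exact hlt)
        have hlenτ : τ.length = cs.length (w * cs.simple i) := by
          have : cs.length (cs.wordProd τ) = τ.length := hred
          rw [← hτ] at this
          omega
        rcases Nat.lt_or_ge j τ.length with hlt' | hge
        · rw [List.eraseIdx_append_of_lt_length hlt', cs.wordProd_append,
            cs.wordProd_singleton] at hjw
          have hz : w₁ = cs.wordProd (τ.eraseIdx j) * cs.simple i := by rw [hw₁, hjw]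
          have hz2 : cs.wordProd (τ.eraseIdx j) = w₁ * cs.simple i := by
            rw [hz, cs.simple_mul_simple_cancel_right i]
          have hℓz : cs.length (cs.wordProd (τ.eraseIdx j)) ≤ τ.length - 1 := by
            have hle := cs.length_wordProd_le (τ.eraseIdx j)
            have hlen := List.length_eraseIdx_add_one hlt'
            omega
          have step1 : bstep cs w₁ (cs.wordProd (τ.eraseIdx j)) := by
            refine ⟨cs.simple i, cs.isReflection_simple i, hz2, ?_⟩
            rw [hz2]
            exact ha
          have step2 : bstep cs (cs.wordProd (τ.eraseIdx j)) (w * cs.simple i) := by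
            refine ⟨cs.simple i * t * cs.simple i, ?_, ?_, ?_⟩
            · have := ht.conj (cs.simple i)
              rwa [cs.inv_simple] at this
            · rw [hz2, hw₁, cancel_identity cs i ht.mul_self w]
            · omega
          exact (hxw₁.tail step1).tail step2
        · have hj2 : j = τ.length := by
            have : j < τ.length + 1 := by simpa using hj
            omega
          have herase : (τ ++ [i]).eraseIdx j = τ := by
            rw [hj2, List.eraseIdx_append_of_length_le (le_refl _)]
            simp
          rw [herase, ← hτ] at hjw
          rw [← hw₁] at hjw
          rw [← hjw]
          exact hxw₁

/-- Lifting lemmas, joint form. -/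
lemma Z12 : ∀ n : ℕ, ∀ w u : W, ∀ i : B, cs.length w ≤ n → ble cs u w →
    cs.length u < cs.length (u * cs.simple i) →
    (cs.length w < cs.length (w * cs.simple i) →
      ble cs (u * cs.simple i) (w * cs.simple i)) ∧
    (cs.length (w * cs.simple i) < cs.length w →
      ble cs (u * cs.simple i) w) := by
  intro n
  induction n with
  | zero =>
    intro w u i hn hu hus
    rcases Relation.ReflTransGen.cases_tail hu with heq | ⟨w₁, hu₁, t, ht, hw, hlt⟩
    · constructor
      · intro _
        rw [heq]
        exact Relation.ReflTransGen.refl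
      · intro h
        exfalso
        rw [heq] at h
        omega
    · exfalso
      omega
  | succ n ih =>
    intro w u i hn hu hus
    rcases Relation.ReflTransGen.cases_tail hu with heq | ⟨w₁, hu₁, t, ht, hw, hlt⟩
    · constructor
      · intro _
        rw [heq]
        exact Relation.ReflTransGen.refl
      · intro h
        exfalso
        rw [heq] at h
        omega
    · have IH := ih w₁ u i (by omega) hu₁ hus
      rcases Nat.lt_or_ge (cs.length (w₁ * cs.simple i)) (cs.length w₁) with hd | ha'
      · have h2 := IH.2 hd
        constructor
        · intro hasc
          exact (h2.tail ⟨t, ht, hw, hlt⟩).tail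
            ⟨cs.simple i, cs.isReflection_simple i, rfl, hasc⟩
        · intro _
          exact h2.tail ⟨t, ht, hw, hlt⟩
      · have ha : cs.length w₁ < cs.length (w₁ * cs.simple i) :=
          lt_of_le_of_ne ha' (cs.length_mul_simple_ne w₁ i).symm
        have h1 := IH.1 ha
        constructor
        · intro hasc
          refine h1.tail ?_
          refine ⟨cs.simple i * t * cs.simple i, ?_, ?_, ?_⟩
          · have := ht.conj (cs.simple i)
            rwa [cs.inv_simple] at this
          · rw [hw]; exact (cancel_identity2 cs i w₁ t).symm
          · have e1 : cs.length (w₁ * cs.simple i) = cs.length w₁ + 1 := by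
              rcases cs.length_mul_simple w₁ i with h | h <;> omega
            omega
        · intro hdesc
          have hw₁ : w₁ = w * t := by
            rw [hw, mul_assoc, ht.mul_self, mul_one]
          have h3 : ble cs (w * t * cs.simple i) w := by
            refine Z3 cs ht ?_ ?_ hdesc
            · rw [← hw₁]; exact hlt
            · rw [← hw₁]; exact ha
          rw [hw₁] at h1
          exact h1.trans h3

end CoxProp

/-! ### Parabolic subgroup combinatorics -/

namespace CoxProp

open List CoxeterSystem

open scoped Classical

section Word

variable {B W : Type} [Group W] {M : CoxeterMatrix B} (cs : CoxeterSystem M W)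

/-- Any word contains a reduced sublist with the same product. -/
lemma reduce_word : ∀ n : ℕ, ∀ ω : List B, ω.length ≤ n →
    ∃ ω', ω' <+ ω ∧ cs.wordProd ω' = cs.wordProd ω ∧ cs.IsReduced ω' := by
  intro n
  induction n with
  | zero =>
    intro ω hω
    have : ω = [] := List.length_eq_zero_iff.mp (by omega)
    subst this
    exact ⟨[], List.Sublist.refl _, rfl, by simp [CoxeterSystem.IsReduced]⟩
  | succ n ih =>
    intro ω hω
    by_cases hred : cs.IsReduced ω
    · exact ⟨ω, List.Sublist.refl _, rfl, hred⟩
    · have hne : ω ≠ [] := by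
        intro hc
        apply hred
        subst hc
        simp [CoxeterSystem.IsReduced]
      obtain ⟨ω₀, a, rfl⟩ := ω.eq_nil_or_concat'.resolve_left hne
      by_cases h0 : cs.IsReduced ω₀
      · have hlt : cs.length (cs.wordProd ω₀ * cs.simple a) < cs.length (cs.wordProd ω₀) := by
          have hne2 : cs.length (cs.wordProd (ω₀ ++ [a])) ≠ (ω₀ ++ [a]).length := hred
          rw [cs.wordProd_append, cs.wordProd_singleton] at hne2
          have h0' : cs.length (cs.wordProd ω₀) = ω₀.length := h0
          have hlen : (ω₀ ++ [a]).length = ω₀.length + 1 := by simp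
          rcases cs.length_mul_simple (cs.wordProd ω₀) a with h | h <;> omega
        obtain ⟨j, hj, hjw⟩ := strong_exchange cs (cs.isReflection_simple a) ω₀ rfl hlt
        obtain ⟨ω', hsub, hprod, hred'⟩ := ih (ω₀.eraseIdx j) (by
          have := List.length_eraseIdx_add_one hj
          have : (ω₀ ++ [a]).length = ω₀.length + 1 := by simp
          omega)
        refine ⟨ω', hsub.trans ((List.eraseIdx_sublist ω₀ j).trans
          (List.sublist_append_left ω₀ [a])), ?_, hred'⟩
        rw [hprod, ← hjw, cs.wordProd_append, cs.wordProd_singleton]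
      · obtain ⟨ω₁, hsub, hprod, hred₁⟩ := ih ω₀ (by
          have : (ω₀ ++ [a]).length = ω₀.length + 1 := by simp
          omega)
        have hlt1 : ω₁.length < ω₀.length := by
          have h1 : cs.length (cs.wordProd ω₁) = ω₁.length := hred₁
          rw [hprod] at h1
          have h2 := cs.length_wordProd_le ω₀
          have h3 : cs.length (cs.wordProd ω₀) ≠ ω₀.length := h0
          omega
        obtain ⟨ω₂, hsub₂, hprod₂, hred₂⟩ := ih (ω₁ ++ [a]) (by
          have : (ω₀ ++ [a]).length = ω₀.length + 1 := by simp
          have : (ω₁ ++ [a]).length = ω₁.length + 1 := by simp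
          omega)
        refine ⟨ω₂, hsub₂.trans (hsub.append_right [a]), ?_, hred₂⟩
        rw [hprod₂, cs.wordProd_append, cs.wordProd_append, hprod]

end Word

end CoxProp

namespace CoxProp

open List CoxeterSystem

open scoped Classical

section Parab

variable {B W V : Type} [Group W] [AddCommGroup V] [Module ℝ V]
variable (D : WeylRootData B W V) (I : Set B)

lemma bruhatLE_eq_ble : D.bruhatLE = ble D.cs := rfl

lemma mem_WL_of_Iword {ω : List B} (hω : ∀ b ∈ ω, b ∈ I) : D.cs.wordProd ω ∈ D.WL I := by
  induction ω with
  | nil =>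
    rw [D.cs.wordProd_nil]
    exact (D.WL I).one_mem
  | cons a ω ih =>
    rw [D.cs.wordProd_cons]
    exact mul_mem (Subgroup.subset_closure ⟨a, hω a (List.mem_cons_self (a := a) (l := ω)), rfl⟩)
      (ih fun b hb => hω b (List.mem_cons_of_mem a hb))

lemma exists_Iword {x : W} (hx : x ∈ D.WL I) :
    ∃ ω : List B, (∀ b ∈ ω, b ∈ I) ∧ D.cs.wordProd ω = x := by
  induction hx using Subgroup.closure_induction with
  | mem y hy =>
    obtain ⟨a, ha, rfl⟩ := hy
    exact ⟨[a], by simpa using ha, D.cs.wordProd_singleton a⟩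
  | one => exact ⟨[], by simp, D.cs.wordProd_nil⟩
  | mul y z _ _ hy hz =>
    obtain ⟨ω₁, h₁, hp₁⟩ := hy
    obtain ⟨ω₂, h₂, hp₂⟩ := hz
    refine ⟨ω₁ ++ ω₂, ?_, by rw [D.cs.wordProd_append, hp₁, hp₂]⟩
    intro b hb
    rcases List.mem_append.mp hb with h | h
    · exact h₁ b h
    · exact h₂ b h
  | inv y _ hy =>
    obtain ⟨ω₁, h₁, hp₁⟩ := hy
    refine ⟨ω₁.reverse, ?_, by rw [D.cs.wordProd_reverse, hp₁]⟩
    intro b hb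
    exact h₁ b (List.mem_reverse.mp hb)

lemma exists_reduced_Iword {x : W} (hx : x ∈ D.WL I) :
    ∃ ω : List B, (∀ b ∈ ω, b ∈ I) ∧ D.cs.IsReduced ω ∧ D.cs.wordProd ω = x := by
  obtain ⟨ω, hmem, hprod⟩ := exists_Iword D I hx
  obtain ⟨ω', hsub, hprod', hred⟩ := reduce_word D.cs ω.length ω le_rfl
  exact ⟨ω', fun b hb => hmem b (hsub.subset hb), hred, by rw [hprod', hprod]⟩

/-- Additivity of lengths over a minimal coset representative. -/
lemma minrep_add {u : W} (hu : D.IsMinRep I u) :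
    ∀ n : ℕ, ∀ x : W, x ∈ D.WL I → D.cs.length x ≤ n →
      D.cs.length (x * u) = D.cs.length x + D.cs.length u := by
  intro n
  induction n with
  | zero =>
    intro x hx hxn
    have hx0 : D.cs.length x = 0 := by omega
    have hx1 : x = 1 := D.cs.length_eq_zero_iff.mp hx0
    rw [hx1, one_mul, D.cs.length_one]
    omega
  | succ n ih =>
    intro x hx hxn
    by_cases hx1 : x = 1
    · rw [hx1, one_mul, D.cs.length_one]
      omega
    obtain ⟨ω, hmem, hred, hprod⟩ := exists_reduced_Iword D I hx
    have hne : ω ≠ [] := by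
      intro hc
      apply hx1
      rw [← hprod, hc, D.cs.wordProd_nil]
    obtain ⟨a, rest, rfl⟩ := List.exists_cons_of_ne_nil hne
    have hra : a ∈ I := hmem a (List.mem_cons_self (a := a) (l := rest))
    have hrestmem : ∀ b ∈ rest, b ∈ I := fun b hb => hmem b (List.mem_cons_of_mem a hb)
    have hrestred : D.cs.IsReduced rest := by
      have := CoxeterSystem.IsReduced.drop hred (j := 1)
      simpa using this
    have hx' : D.cs.wordProd rest ∈ D.WL I := mem_WL_of_Iword D I hrestmem
    have hxsplit : x = D.cs.simple a * D.cs.wordProd rest := by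
      rw [← hprod, D.cs.wordProd_cons]
    have hlx : D.cs.length x = rest.length + 1 := by
      have : D.cs.length (D.cs.wordProd (a :: rest)) = (a :: rest).length := hred
      rw [hprod] at this
      simpa using this
    have hlx' : D.cs.length (D.cs.wordProd rest) = rest.length := hrestred
    have hIH : D.cs.length (D.cs.wordProd rest * u)
        = D.cs.length (D.cs.wordProd rest) + D.cs.length u := by
      apply ih _ hx'
      omega
    obtain ⟨ωu, hredu, hu'⟩ := D.cs.exists_reduced_word' u
    have hlenu : ωu.length = D.cs.length u := by
      have : D.cs.length (D.cs.wordProd ωu) = ωu.length := hredu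
      rw [← hu'] at this
      omega
    have hkey : ¬ D.cs.length (D.cs.simple a * (D.cs.wordProd rest * u))
        < D.cs.length (D.cs.wordProd rest * u) := by
      intro hlt
      set y := D.cs.wordProd rest * u with hy
      have ht : D.cs.IsReflection (y⁻¹ * D.cs.simple a * y) := by
        have := (D.cs.isReflection_simple a).conj y⁻¹
        simpa using this
      have hyt : y * (y⁻¹ * D.cs.simple a * y) = D.cs.simple a * y := by
        group
      have hπy : D.cs.wordProd (rest ++ ωu) = y := by
        rw [D.cs.wordProd_append, ← hu']
      obtain ⟨j, hj, hjw⟩ := strong_exchange D.cs ht (rest ++ ωu) hπy (by rw [hyt]; exact hlt)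
      rw [hyt] at hjw
      have hxu : x * u = D.cs.wordProd ((rest ++ ωu).eraseIdx j) := by
        rw [hxsplit, mul_assoc, ← hy, hjw]
      have hjlen : j < rest.length + ωu.length := by simpa using hj
      rcases Nat.lt_or_ge j rest.length with hlt' | hge
      · rw [List.eraseIdx_append_of_lt_length hlt', D.cs.wordProd_append, ← hu'] at hxu
        have hxeq : x = D.cs.wordProd (rest.eraseIdx j) := mul_right_cancel hxu
        have h1 := D.cs.length_wordProd_le (rest.eraseIdx j)
        have h2 := List.length_eraseIdx_add_one hlt'
        rw [← hxeq] at h1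
        omega
      · rw [List.eraseIdx_append_of_length_le hge, D.cs.wordProd_append] at hxu
        have hz : (D.cs.wordProd rest)⁻¹ * x ∈ D.WL I :=
          mul_mem (inv_mem hx') (by rw [← hprod]; exact mem_WL_of_Iword D I hmem)
        have hzu : ((D.cs.wordProd rest)⁻¹ * x) * u
            = D.cs.wordProd (ωu.eraseIdx (j - rest.length)) := by
          rw [mul_assoc, hxu]
          group
        have h1 := D.cs.length_wordProd_le (ωu.eraseIdx (j - rest.length))
        have h2 : j - rest.length < ωu.length := by omega
        have h3 := List.length_eraseIdx_add_one h2
        rw [← hzu] at h1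
        have h4 := hu _ hz
        omega
    have hfin : D.cs.length (D.cs.simple a * (D.cs.wordProd rest * u))
        = D.cs.length (D.cs.wordProd rest * u) + 1 := by
      rcases D.cs.length_simple_mul (D.cs.wordProd rest * u) a with h | h
      · exact h
      · omega
    have hgoal : D.cs.length (x * u) = D.cs.length (D.cs.wordProd rest * u) + 1 := by
      rw [hxsplit, mul_assoc]
      exact hfin
    omega

/-- A minimal representative is Bruhat-below every element of its coset. -/
lemma minrep_le {u : W} (hu : D.IsMinRep I u) :
    ∀ n : ℕ, ∀ x : W, x ∈ D.WL I → D.cs.length x ≤ n → ble D.cs u (x * u) := by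
  intro n
  induction n with
  | zero =>
    intro x hx hxn
    have hx0 : D.cs.length x = 0 := by omega
    have hx1 : x = 1 := D.cs.length_eq_zero_iff.mp hx0
    rw [hx1, one_mul]
    exact Relation.ReflTransGen.refl
  | succ n ih =>
    intro x hx hxn
    by_cases hx1 : x = 1
    · rw [hx1, one_mul]
      exact Relation.ReflTransGen.refl
    obtain ⟨ω, hmem, hred, hprod⟩ := exists_reduced_Iword D I hx
    have hne : ω ≠ [] := by
      intro hc
      apply hx1
      rw [← hprod, hc, D.cs.wordProd_nil]
    obtain ⟨a, rest, rfl⟩ := List.exists_cons_of_ne_nil hne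
    have hrestmem : ∀ b ∈ rest, b ∈ I := fun b hb => hmem b (List.mem_cons_of_mem a hb)
    have hrestred : D.cs.IsReduced rest := by
      have := CoxeterSystem.IsReduced.drop hred (j := 1)
      simpa using this
    have hx' : D.cs.wordProd rest ∈ D.WL I := mem_WL_of_Iword D I hrestmem
    have hxsplit : x = D.cs.simple a * D.cs.wordProd rest := by
      rw [← hprod, D.cs.wordProd_cons]
    have hlx : D.cs.length x = rest.length + 1 := by
      have : D.cs.length (D.cs.wordProd (a :: rest)) = (a :: rest).length := hred
      rw [hprod] at this
      simpa using this
    have hlx' : D.cs.length (D.cs.wordProd rest) = rest.length := hrestred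
    have hIH : ble D.cs u (D.cs.wordProd rest * u) := ih _ hx' (by omega)
    refine hIH.tail ?_
    set y := D.cs.wordProd rest * u with hy
    refine ⟨y⁻¹ * D.cs.simple a * y, ?_, ?_, ?_⟩
    · have := (D.cs.isReflection_simple a).conj y⁻¹
      simpa using this
    · rw [hxsplit, mul_assoc, ← hy]
      group
    · have e1 := minrep_add D I hu (D.cs.length x) x hx le_rfl
      have e2 := minrep_add D I hu (D.cs.length (D.cs.wordProd rest)) _ hx' le_rfl
      rw [e1, hy, e2]
      omega

/-- Reduction of `cosetLE` to the Bruhat order, for minimal representatives. -/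
lemma cosetLE_iff {u : W} (hu : D.IsMinRep I u) (v : W) :
    D.cosetLE I u v ↔ ∃ y ∈ D.WL I, D.bruhatLE u (y * v) := by
  constructor
  · rintro ⟨x, hx, y, hy, h⟩
    refine ⟨y, hy, ?_⟩
    rw [bruhatLE_eq_ble] at h ⊢
    exact (minrep_le D I hu (D.cs.length x) x hx le_rfl).trans h
  · rintro ⟨y, hy, h⟩
    exact ⟨1, (D.WL I).one_mem, y, hy, by rwa [one_mul]⟩

/-- If `u` has no left `I`-descents then it is a minimal representative. -/
lemma minrep_of_no_descent {u : W}
    (h : ∀ a ∈ I, D.cs.length u < D.cs.length (D.cs.simple a * u)) : D.IsMinRep I u := by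
  have hP : ∃ n : ℕ, ∃ x, x ∈ D.WL I ∧ D.cs.length (x * u) = n :=
    ⟨D.cs.length u, 1, (D.WL I).one_mem, by rw [one_mul]⟩
  obtain ⟨x₀, hx₀, hx₀l⟩ := Nat.find_spec hP
  have hmin : D.IsMinRep I (x₀ * u) := by
    intro x hx
    have hPx : ∃ x', x' ∈ D.WL I ∧ D.cs.length (x' * u) = D.cs.length (x * (x₀ * u)) :=
      ⟨x * x₀, mul_mem hx hx₀, by rw [mul_assoc]⟩
    have := Nat.find_min' hP hPx
    omega
  have hz : x₀⁻¹ ∈ D.WL I := inv_mem hx₀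
  by_cases hz1 : x₀⁻¹ = 1
  · have : x₀ = 1 := by
      rw [← inv_inv x₀, hz1, inv_one]
    rw [this, one_mul] at hmin
    exact hmin
  · exfalso
    obtain ⟨ω, hmem, hred, hprod⟩ := exists_reduced_Iword D I hz
    have hne : ω ≠ [] := by
      intro hc
      apply hz1
      rw [← hprod, hc, D.cs.wordProd_nil]
    obtain ⟨a, rest, rfl⟩ := List.exists_cons_of_ne_nil hne
    have hra : a ∈ I := hmem a (List.mem_cons_self (a := a) (l := rest))
    have hrestmem : ∀ b ∈ rest, b ∈ I := fun b hb => hmem b (List.mem_cons_of_mem a hb)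
    have hrestred : D.cs.IsReduced rest := by
      have := CoxeterSystem.IsReduced.drop hred (j := 1)
      simpa using this
    have hx' : D.cs.wordProd rest ∈ D.WL I := mem_WL_of_Iword D I hrestmem
    have hlz : D.cs.length x₀⁻¹ = rest.length + 1 := by
      have : D.cs.length (D.cs.wordProd (a :: rest)) = (a :: rest).length := hred
      rw [hprod] at this
      simpa using this
    have hlrest : D.cs.length (D.cs.wordProd rest) = rest.length := hrestred
    have hsplit : x₀⁻¹ = D.cs.simple a * D.cs.wordProd rest := by
      rw [← hprod, D.cs.wordProd_cons]
    have hueq : u = x₀⁻¹ * (x₀ * u) := by group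
    have e1 := minrep_add D I hmin (D.cs.length x₀⁻¹) x₀⁻¹ hz le_rfl
    have e2 := minrep_add D I hmin (D.cs.length (D.cs.wordProd rest)) _ hx' le_rfl
    have hsau : D.cs.simple a * u = D.cs.wordProd rest * (x₀ * u) := by
      have h1 : D.cs.wordProd rest = D.cs.simple a * x₀⁻¹ := by
        rw [hsplit, D.cs.simple_mul_simple_cancel_left a]
      rw [h1]
      group
    have hcontr := h a hra
    have hL1 : D.cs.length u = D.cs.length x₀⁻¹ + D.cs.length (x₀ * u) := by
      conv_lhs => rw [hueq]
      exact e1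
    have hL2 : D.cs.length (D.cs.simple a * u)
        = D.cs.length (D.cs.wordProd rest) + D.cs.length (x₀ * u) := by
      rw [hsau]
      exact e2
    omega

/-- Minimality transfers across a right descent by a simple reflection. -/
lemma minrep_mul_simple {u : W} (hu : D.IsMinRep I u) (i : B)
    (hd : D.cs.length (u * D.cs.simple i) < D.cs.length u) :
    D.IsMinRep I (u * D.cs.simple i) := by
  apply minrep_of_no_descent
  intro a ha
  have h1 : D.cs.length u < D.cs.length (D.cs.simple a * u) := by
    have hle := hu (D.cs.simple a) (Subgroup.subset_closure ⟨a, ha, rfl⟩)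
    have hne := D.cs.length_simple_mul_ne u a
    omega
  have h2 : D.cs.length (D.cs.simple a * u)
      ≤ D.cs.length (D.cs.simple a * u * D.cs.simple i) + 1 := by
    rcases D.cs.length_mul_simple (D.cs.simple a * u) i with h | h <;> omega
  have h3 : D.cs.length (D.cs.simple a * (u * D.cs.simple i))
      = D.cs.length (D.cs.simple a * u * D.cs.simple i) := by
    rw [mul_assoc]
  have h4 : D.cs.length (u * D.cs.simple i) + 1 = D.cs.length u := by
    rcases D.cs.length_mul_simple u i with h | h <;> omega
  omega

end Parab

end CoxProp
/-- Property Z for parabolic Bruhat order: for minimal length coset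
representatives `u, v` and a simple reflection `s` with `ℓ(us) ≤ ℓ(u)`, `ℓ(vs) ≤ ℓ(v)`:
`W_L·u ≤ W_L·v ⟺ W_L·us ≤ W_L·v ⟺ W_L·us ≤ W_L·vs`. -/
theorem stmt7 {B W V : Type} [Group W] [AddCommGroup V] [Module ℝ V]
    (D : WeylRootData B W V) (I : Set B) (u v : W)
    (hu : D.IsMinRep I u) (hv : D.IsMinRep I v) (i : B)
    (hus : D.cs.length (u * D.cs.simple i) ≤ D.cs.length u)
    (hvs : D.cs.length (v * D.cs.simple i) ≤ D.cs.length v) :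
    (D.cosetLE I u v ↔ D.cosetLE I (u * D.cs.simple i) v) ∧
    (D.cosetLE I (u * D.cs.simple i) v ↔
      D.cosetLE I (u * D.cs.simple i) (v * D.cs.simple i)) := by
  classical
  have hrfl := D.cs.isReflection_simple i
  have hus1 : D.cs.length (u * D.cs.simple i) + 1 = D.cs.length u := by
    rcases D.cs.length_mul_simple u i with h | h
    · omega
    · exact h
  have hvs1 : D.cs.length (v * D.cs.simple i) + 1 = D.cs.length v := by
    rcases D.cs.length_mul_simple v i with h | h
    · omega
    · exact h
  have husd : D.cs.length (u * D.cs.simple i) < D.cs.length u := by omega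
  have hvsd : D.cs.length (v * D.cs.simple i) < D.cs.length v := by omega
  have husmin : D.IsMinRep I (u * D.cs.simple i) := CoxProp.minrep_mul_simple D I hu i husd
  have hvsmin : D.IsMinRep I (v * D.cs.simple i) := CoxProp.minrep_mul_simple D I hv i hvsd
  have hcanu : (u * D.cs.simple i) * D.cs.simple i = u := D.cs.simple_mul_simple_cancel_right i
  have hcanv : (v * D.cs.simple i) * D.cs.simple i = v := D.cs.simple_mul_simple_cancel_right i
  have hyv : ∀ y ∈ D.WL I, D.cs.length (y * v) = D.cs.length y + D.cs.length v :=
    fun y hy => CoxProp.minrep_add D I hv (D.cs.length y) y hy le_rfl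
  have hyvs : ∀ y ∈ D.WL I, D.cs.length (y * (v * D.cs.simple i))
      = D.cs.length y + D.cs.length (v * D.cs.simple i) :=
    fun y hy => CoxProp.minrep_add D I hvsmin (D.cs.length y) y hy le_rfl
  have hyvdesc : ∀ y ∈ D.WL I,
      D.cs.length ((y * v) * D.cs.simple i) < D.cs.length (y * v) := by
    intro y hy
    rw [mul_assoc, hyvs y hy, hyv y hy]
    omega
  constructor
  · constructor
    · intro h
      obtain ⟨y, hy, hle⟩ := (CoxProp.cosetLE_iff D I hu v).mp h
      refine (CoxProp.cosetLE_iff D I husmin v).mpr ⟨y, hy, ?_⟩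
      rw [CoxProp.bruhatLE_eq_ble] at hle ⊢
      refine Relation.ReflTransGen.trans (Relation.ReflTransGen.single ?_) hle
      exact ⟨D.cs.simple i, hrfl, hcanu.symm, by omega⟩
    · intro h
      obtain ⟨y, hy, hle⟩ := (CoxProp.cosetLE_iff D I husmin v).mp h
      refine (CoxProp.cosetLE_iff D I hu v).mpr ⟨y, hy, ?_⟩
      rw [CoxProp.bruhatLE_eq_ble] at hle ⊢
      have hZ := (CoxProp.Z12 D.cs (D.cs.length (y * v)) (y * v) (u * D.cs.simple i) i le_rfl
        hle (by rw [hcanu]; omega)).2 (hyvdesc y hy)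
      rwa [hcanu] at hZ
  · constructor
    · intro h
      obtain ⟨y, hy, hle⟩ := (CoxProp.cosetLE_iff D I husmin v).mp h
      refine (CoxProp.cosetLE_iff D I husmin (v * D.cs.simple i)).mpr ⟨y, hy, ?_⟩
      rw [CoxProp.bruhatLE_eq_ble] at hle ⊢
      have hZ := CoxProp.Z7 D.cs (D.cs.length (y * v)) (y * v) (u * D.cs.simple i) i le_rfl
        hle (hyvdesc y hy) (by rw [hcanu]; omega)
      rwa [mul_assoc] at hZ
    · intro h
      obtain ⟨y, hy, hle⟩ := (CoxProp.cosetLE_iff D I husmin (v * D.cs.simple i)).mp h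
      refine (CoxProp.cosetLE_iff D I husmin v).mpr ⟨y, hy, ?_⟩
      rw [CoxProp.bruhatLE_eq_ble] at hle ⊢
      refine hle.tail ?_
      refine ⟨D.cs.simple i, hrfl, ?_, ?_⟩
      · rw [mul_assoc y (v * D.cs.simple i) (D.cs.simple i), hcanv]
      · rw [hyvs y hy, hyv y hy]
        omega
end

section
/- Let W be a Weyl group, I ⊆ Π, W_L the corresponding parabolic subgroup, and α ∈ Π \ I. If β = w(α) for some w ∈ W_L and β is a simple root, then β = α. -/
open CoxeterSystem

namespace TitsAux

variable {B : Type} (M : CoxeterMatrix B)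

/-- entries of the bilinear form -/
noncomputable def K (b c : B) : ℝ := - Real.cos (Real.pi / (M b c))

lemma K_diag (b : B) : K M b b = 1 := by
  simp [K, M.diagonal b]

lemma K_symm (b c : B) : K M b c = K M c b := by
  unfold K
  rw [M.isSymm.apply c b]

/-- basis vector -/
noncomputable def e (b : B) : (B →₀ ℝ) := Finsupp.single b 1

/-- the symmetric bilinear form of the Tits representation -/
noncomputable def Φ : (B →₀ ℝ) →ₗ[ℝ] (B →₀ ℝ) →ₗ[ℝ] ℝ :=
  Finsupp.linearCombination ℝ (fun b => Finsupp.linearCombination ℝ (fun c => K M b c))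

lemma Φ_e (b : B) : Φ M (e b) = Finsupp.linearCombination ℝ (fun c => K M b c) := by
  rw [Φ, e, Finsupp.linearCombination_single, one_smul]

lemma Φ_e_e (b c : B) : Φ M (e b) (e c) = K M b c := by
  rw [Φ_e, e, Finsupp.linearCombination_single, smul_eq_mul, one_mul]

/-- the reflection, as a linear map -/
noncomputable def sigmaL (b : B) : (B →₀ ℝ) →ₗ[ℝ] (B →₀ ℝ) :=
  LinearMap.id - ((Φ M).flip (e b)).smulRight ((2:ℝ) • e b)

lemma sigmaL_apply (b : B) (v : B →₀ ℝ) :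
    sigmaL M b v = v - (2 * Φ M v (e b)) • e b := by
  simp [sigmaL, smul_smul, mul_comm]

lemma sigmaL_invol (b : B) : Function.Involutive (sigmaL M b) := by
  intro v
  rw [sigmaL_apply, sigmaL_apply]
  rw [map_sub, map_smul]
  simp only [LinearMap.sub_apply, LinearMap.smul_apply, Φ_e_e, K_diag, smul_eq_mul, mul_one]
  rw [mul_sub]
  module

/-- the simple reflections of the Tits representation -/
noncomputable def σ (b : B) : (B →₀ ℝ) ≃ₗ[ℝ] (B →₀ ℝ) :=
  LinearEquiv.ofInvolutive (sigmaL M b) (sigmaL_invol M b)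

lemma σ_apply (b : B) (v : B →₀ ℝ) :
    σ M b v = v - (2 * Φ M v (e b)) • e b := sigmaL_apply M b v

end TitsAux

namespace TitsAux

variable {B : Type} (M : CoxeterMatrix B)

lemma mul_apply (f g : (B →₀ ℝ) ≃ₗ[ℝ] (B →₀ ℝ)) (v : B →₀ ℝ) : (f * g) v = f (g v) := rfl

lemma Φ_apply_sub (v w : B →₀ ℝ) (t : ℝ) (u : B →₀ ℝ) :
    Φ M (v - t • w) u = Φ M v u - t * Φ M w u := by
  rw [map_sub, map_smul, LinearMap.sub_apply, LinearMap.smul_apply, smul_eq_mul]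

lemma sigma_mul_apply (b c : B) (v : B →₀ ℝ) :
    (σ M b * σ M c) v = v - (2 * (Φ M v (e b) - 2 * K M b c * Φ M v (e c))) • e b
      - (2 * Φ M v (e c)) • e c := by
  rw [mul_apply, σ_apply, σ_apply, Φ_apply_sub, Φ_e_e, K_symm M c b]
  module

lemma sigma_mul_e_left (b c : B) :
    (σ M b * σ M c) (e b) = (4 * K M b c ^ 2 - 1) • e b - (2 * K M b c) • e c := by
  rw [sigma_mul_apply, Φ_e_e, Φ_e_e, K_diag]
  module

lemma sigma_mul_e_right (b c : B) :
    (σ M b * σ M c) (e c) = (2 * K M b c) • e b - e c := by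
  rw [sigma_mul_apply, Φ_e_e, Φ_e_e, K_diag, K_symm M c b]
  module

theorem braid_rel (b c : B) (hbc : b ≠ c) : (σ M b * σ M c) ^ (M b c) = (1 : _) := by
  rcases Nat.eq_zero_or_pos (M b c) with h0 | hpos
  · rw [h0, pow_zero]
  have hm2 : 2 ≤ M b c := by
    have hne1 := M.off_diagonal b c hbc
    omega
  set m : ℕ := M b c with hm
  set θ : ℝ := Real.pi / m with hθ
  set s : ℝ := Real.sin θ with hs
  set cθ : ℝ := Real.cos θ with hcθ
  have hmR : (0:ℝ) < m := by exact_mod_cast hpos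
  have hθpos : 0 < θ := div_pos Real.pi_pos hmR
  have hθlt : θ < Real.pi := by
    rw [hθ]
    apply div_lt_self Real.pi_pos
    exact_mod_cast hm2.trans_lt' (by norm_num)
  have hspos : 0 < s := Real.sin_pos_of_pos_of_lt_pi hθpos hθlt
  have hsne : s ≠ 0 := ne_of_gt hspos
  have hss : s * s⁻¹ = 1 := mul_inv_cancel₀ hsne
  have hk : K M b c = -cθ := rfl
  have h1 : s ^ 2 + cθ ^ 2 = 1 := Real.sin_sq_add_cos_sq θ
  have key : ∀ n : ℕ, ∀ v : B →₀ ℝ,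
      ((σ M b * σ M c) ^ n) v = v
        + (-(2/s^2) * Real.sin (n*θ) * (Real.sin (n*θ) * Φ M v (e b)
            + (Real.sin (n*θ) * cθ + Real.cos (n*θ) * s) * Φ M v (e c))) • e b
        + (-(2/s^2) * Real.sin (n*θ) * ((Real.sin (n*θ) * cθ - Real.cos (n*θ) * s) * Φ M v (e b)
            + Real.sin (n*θ) * Φ M v (e c))) • e c := by
    intro n
    induction n with
    | zero =>
      intro v
      simp
    | succ n ih =>
      intro v
      have h2 : Real.sin (n*θ) ^ 2 + Real.cos (n*θ) ^ 2 = 1 := Real.sin_sq_add_cos_sq _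
      have hsin : Real.sin ((n+1 : ℕ)*θ) = Real.sin (n*θ) * cθ + Real.cos (n*θ) * s := by
        push_cast
        rw [add_mul, one_mul, Real.sin_add]
      have hcos : Real.cos ((n+1 : ℕ)*θ) = Real.cos (n*θ) * cθ - Real.sin (n*θ) * s := by
        push_cast
        rw [add_mul, one_mul, Real.cos_add]
      rw [pow_succ', mul_apply, ih v, map_add, map_add, map_smul, map_smul,
        sigma_mul_apply, sigma_mul_e_left, sigma_mul_e_right, hsin, hcos, hk]
      match_scalars
      · ring
      · linear_combination (2/s^2*(-(Real.sin (n*θ)^2 * Φ M v (e b))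
            - 3*Real.sin (n*θ)^2*cθ*Φ M v (e c)
            - Real.sin (n*θ)*Real.cos (n*θ)*s*Φ M v (e c))) * h1
          + (2/s^2*(s^2*Φ M v (e b) + 2*cθ*s^2*Φ M v (e c))) * h2
          + ((2*Φ M v (e b) + 4*cθ*Φ M v (e c))*(s*s⁻¹+1)) * hss
      · linear_combination (2/s^2*(Real.sin (n*θ)^2*cθ*Φ M v (e b)
            + Real.sin (n*θ)*Real.cos (n*θ)*s*Φ M v (e b)
            - Real.sin (n*θ)^2*Φ M v (e c))) * h1
          + (2/s^2*(s^2*Φ M v (e c))) * h2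
          + (2*Φ M v (e c)*(s*s⁻¹+1)) * hss
  apply LinearEquiv.ext
  intro v
  have := key m v
  have hmθ : (m:ℝ) * θ = Real.pi := by
    rw [hθ]
    field_simp
  rw [hmθ, Real.sin_pi] at this
  simpa using this

end TitsAux

namespace TitsAux

variable {B : Type} (M : CoxeterMatrix B)

theorem isLiftable : M.IsLiftable (fun b => σ M b) := by
  intro b c
  rcases eq_or_ne b c with rfl | hbc
  · rw [M.diagonal, pow_one]
    apply LinearEquiv.ext
    intro v
    show σ M b (σ M b v) = v
    rw [σ_apply, σ_apply, Φ_apply_sub, Φ_e_e, K_diag]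
    match_scalars <;> ring
  · exact braid_rel M b c hbc

lemma inv_apply_apply (g : (B →₀ ℝ) ≃ₗ[ℝ] (B →₀ ℝ)) (x : B →₀ ℝ) : (g⁻¹) (g x) = x :=
  g.symm_apply_apply x

theorem conj_simple_eq {W : Type} [Group W] (cs : CoxeterSystem M W)
    (I : Set B) (i : B) (hi : i ∉ I) (w : W)
    (hw : w ∈ Subgroup.closure (cs.simple '' I))
    (j : B) (hconj : cs.simple j = w * cs.simple i * w⁻¹) : j = i := by
  classical
  set ρ : W →* ((B →₀ ℝ) ≃ₗ[ℝ] (B →₀ ℝ)) := cs.lift ⟨fun b => σ M b, isLiftable M⟩ with hρ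
  have hρs : ∀ b : B, ρ (cs.simple b) = σ M b := fun b => cs.lift_apply_simple (isLiftable M) b
  set S : Submodule ℝ (B →₀ ℝ) := Submodule.span ℝ ((fun γ => e γ) '' I) with hS
  -- the subgroup of elements stabilizing `S` and moving `e i` by an element of `S`
  set H : Subgroup W :=
    { carrier := {u | (ρ u (e i) - e i ∈ S) ∧ (ρ u⁻¹ (e i) - e i ∈ S) ∧
        Submodule.map ((ρ u : (B →₀ ℝ) ≃ₗ[ℝ] (B →₀ ℝ)) : (B →₀ ℝ) →ₗ[ℝ] (B →₀ ℝ)) S = S ∧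
        Submodule.map ((ρ u⁻¹ : (B →₀ ℝ) ≃ₗ[ℝ] (B →₀ ℝ)) : (B →₀ ℝ) →ₗ[ℝ] (B →₀ ℝ)) S = S},
      one_mem' := by
        refine ⟨?_, ?_, ?_, ?_⟩ <;>
          simp [map_one, LinearEquiv.coe_toLinearMap_one, Submodule.map_id]
      mul_mem' := by
        rintro a b ⟨ha1, ha2, ha3, ha4⟩ ⟨hb1, hb2, hb3, hb4⟩
        have key : ∀ u v : W, (ρ u (e i) - e i ∈ S) → (ρ v (e i) - e i ∈ S) →
            Submodule.map ((ρ u : (B →₀ ℝ) ≃ₗ[ℝ] (B →₀ ℝ)) : (B →₀ ℝ) →ₗ[ℝ] (B →₀ ℝ)) S = S →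
            ρ (u * v) (e i) - e i ∈ S := by
          intro u v hu hv hmapu
          have : ρ (u * v) (e i) - e i
              = ρ u (ρ v (e i) - e i) + (ρ u (e i) - e i) := by
            rw [map_mul]
            show (ρ u) ((ρ v) (e i)) - e i = _
            rw [map_sub]
            abel
          rw [this]
          refine S.add_mem ?_ hu
          rw [← hmapu]
          exact Submodule.mem_map_of_mem hv
        have keymap : ∀ u v : W,
            Submodule.map ((ρ u : (B →₀ ℝ) ≃ₗ[ℝ] (B →₀ ℝ)) : (B →₀ ℝ) →ₗ[ℝ] (B →₀ ℝ)) S = S →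
            Submodule.map ((ρ v : (B →₀ ℝ) ≃ₗ[ℝ] (B →₀ ℝ)) : (B →₀ ℝ) →ₗ[ℝ] (B →₀ ℝ)) S = S →
            Submodule.map ((ρ (u * v) : (B →₀ ℝ) ≃ₗ[ℝ] (B →₀ ℝ)) : (B →₀ ℝ) →ₗ[ℝ] (B →₀ ℝ)) S = S := by
          intro u v hu hv
          rw [map_mul, LinearEquiv.coe_toLinearMap_mul, Module.End.mul_eq_comp,
            Submodule.map_comp, hv, hu]
        refine ⟨key a b ha1 hb1 ha3, ?_, keymap a b ha3 hb3, ?_⟩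
        · rw [mul_inv_rev]
          exact key b⁻¹ a⁻¹ hb2 ha2 hb4
        · rw [mul_inv_rev]
          exact keymap b⁻¹ a⁻¹ hb4 ha4
      inv_mem' := by
        rintro a ⟨ha1, ha2, ha3, ha4⟩
        exact ⟨ha2, by rwa [inv_inv], ha4, by rwa [inv_inv]⟩ } with hH
  have hgen : cs.simple '' I ⊆ (H : Set W) := by
    rintro x ⟨γ, hγ, rfl⟩
    have heγS : e γ ∈ S := Submodule.subset_span ⟨γ, hγ, rfl⟩
    have hmove : ∀ v : B →₀ ℝ, v ∈ S → σ M γ v ∈ S := by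
      intro v hv
      rw [σ_apply]
      exact S.sub_mem hv (S.smul_mem _ heγS)
    have hmap : Submodule.map ((σ M γ : (B →₀ ℝ) ≃ₗ[ℝ] (B →₀ ℝ)) : (B →₀ ℝ) →ₗ[ℝ] (B →₀ ℝ)) S = S := by
      apply le_antisymm
      · rintro x ⟨v, hv, rfl⟩
        exact hmove v hv
      · intro x hx
        refine ⟨σ M γ x, hmove x hx, ?_⟩
        exact sigmaL_invol M γ x
    have hc1 : ρ (cs.simple γ) (e i) - e i ∈ S := by
      rw [hρs, σ_apply]
      have : e i - (2 * Φ M (e i) (e γ)) • e γ - e i = (-(2 * Φ M (e i) (e γ))) • e γ := by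
        module
      rw [this]
      exact S.smul_mem _ heγS
    refine ⟨hc1, ?_, ?_, ?_⟩
    · rw [cs.inv_simple]
      exact hc1
    · rw [hρs]
      exact hmap
    · rw [cs.inv_simple, hρs]
      exact hmap
  have hwH : w ∈ H := (Subgroup.closure_le H).mpr hgen hw
  obtain ⟨hu, -, -, -⟩ := hwH
  -- the root β
  set β : B →₀ ℝ := ρ w (e i) with hβ
  have hβeq : σ M j β = - β := by
    have h1 : ρ (cs.simple j) β = ρ w (σ M i ((ρ w)⁻¹ β)) := by
      rw [hconj, map_mul, map_mul, map_inv, hρs]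
      rfl
    rw [hρs] at h1
    rw [h1, hβ, inv_apply_apply]
    have h2 : σ M i (e i) = - e i := by
      rw [σ_apply, Φ_e_e, K_diag]
      module
    rw [h2, map_neg]
  have hβj : β = (Φ M β (e j)) • e j := by
    rw [σ_apply] at hβeq
    have h0 : β + β = (2 * Φ M β (e j)) • e j := by
      have : β - (2 * Φ M β (e j)) • e j + ((2 * Φ M β (e j)) • e j + β) = 0 + ((2 * Φ M β (e j)) • e j) := by
        rw [hβeq]
        abel
      calc β + β = β - (2 * Φ M β (e j)) • e j + ((2 * Φ M β (e j)) • e j + β) := by abel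
      _ = (2 * Φ M β (e j)) • e j := by rw [this, zero_add]
    calc β = (2:ℝ)⁻¹ • (β + β) := by
            rw [← two_smul ℝ β, smul_smul]
            norm_num
    _ = (2:ℝ)⁻¹ • ((2 * Φ M β (e j)) • e j) := by rw [h0]
    _ = (Φ M β (e j)) • e j := by
            rw [smul_smul]
            congr 1
            ring
  -- coordinates at i
  have hSker : ∀ f, f ∈ S → f i = (0:ℝ) := by
    intro f hf
    have hle : S ≤ LinearMap.ker (Finsupp.lapply (M := ℝ) (R := ℝ) i) := by
      rw [hS, Submodule.span_le]
      rintro x ⟨γ, hγ, rfl⟩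
      have hne : γ ≠ i := fun hh => hi (hh ▸ hγ)
      simp [LinearMap.mem_ker, Finsupp.lapply, e, Finsupp.single_apply, hne]
    exact hle hf
  have hβi : β i = 1 := by
    have h1 : (β - e i) i = 0 := hSker _ hu
    have h2 : (β - e i) i = β i - (e i) i := by
      rw [Finsupp.sub_apply]
    have h3 : (e i) i = 1 := by
      rw [e, Finsupp.single_eq_same]
    have := h2 ▸ h1
    linarith [this, h3]
  by_contra hne
  have : β i = 0 := by
    rw [hβj, Finsupp.smul_apply, e, Finsupp.single_apply, if_neg hne, smul_zero]
  rw [this] at hβi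
  exact one_ne_zero hβi.symm

end TitsAux


/-- For `α ∈ Π \ I` and `w ∈ W_L`, if `w(α)` is a simple root `β`
then `β = α`. -/

theorem stmt11 {B W V : Type} [Group W] [AddCommGroup V] [Module ℝ V]
    (D : WeylRootData B W V) (I : Set B) (i : B) (hi : i ∉ I)
    (w : W) (hw : w ∈ D.WL I) (j : B) (h : D.act w (D.basis i) = D.basis j) :
    j = i := by
  have hroot := D.isRoot_simple i
  have hrc := D.refl_conj w (D.basis i) hroot
  rw [h, D.refl_simple, D.refl_simple] at hrc
  have hw' : w ∈ Subgroup.closure (D.cs.simple '' I) := hw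
  exact TitsAux.conj_simple_eq D.M D.cs I i hi w hw' j hrc
end
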